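/- Let η : ℝ → ℝ be a compactly supported integrable function, and define η² : ℝ² → ℝ by η²(x) = (1/(2π)) ∫₀^{2π} η(⟨x, u_θ⟩) · η(⟨x, v_θ⟩) dθ. Then η² is integrable on ℝ² and its two-dimensional Fourier transform satisfies, for every ω ∈ ℝ², η̂²(ω) = (1/(2π)) ∫₀^{2π} η̂(⟨ω, u_θ⟩) · η̂(⟨ω, v_θ⟩) dθ, where η̂ denotes the one-dimensional Fourier transform of η. -/

import Mathlib

open MeasureTheory Real RealInnerProductSpace

/-- The unit vector u_θ = (cos θ, sin θ) in ℝ². -/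
noncomputable def uVec (θ : ℝ) : EuclideanSpace ℝ (Fin 2) :=
  (WithLp.equiv 2 (Fin 2 → ℝ)).symm ![Real.cos θ, Real.sin θ]

/-- The unit vector v_θ = u_{θ+π/2} = (−sin θ, cos θ) in ℝ². -/
noncomputable def vVec (θ : ℝ) : EuclideanSpace ℝ (Fin 2) :=
  (WithLp.equiv 2 (Fin 2 → ℝ)).symm ![-Real.sin θ, Real.cos θ]

/-- The radialization η²(x) = (1/(2π)) ∫₀^{2π} η(⟨x,u_θ⟩) η(⟨x,v_θ⟩) dθ. -/
noncomputable def radialization (η : ℝ → ℝ) (x : EuclideanSpace ℝ (Fin 2)) : ℝ :=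
  (1 / (2 * π)) * ∫ θ in (0:ℝ)..(2 * π), η ⟪x, uVec θ⟫ * η ⟪x, vVec θ⟫

open FourierTransform

/-- for a compactly supported integrable η : ℝ → ℝ, the radialization η² is
integrable on ℝ² and its 2D Fourier transform is the radialization (in the same angular-average
sense) of the 1D Fourier transform of η:
η̂²(ω) = (1/(2π)) ∫₀^{2π} η̂(⟨ω,u_θ⟩) η̂(⟨ω,v_θ⟩) dθ. -/
lemma uVec_apply0 (θ : ℝ) : uVec θ 0 = Real.cos θ := rfl
lemma uVec_apply1 (θ : ℝ) : uVec θ 1 = Real.sin θ := rfl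
lemma vVec_apply0 (θ : ℝ) : vVec θ 0 = -Real.sin θ := rfl
lemma vVec_apply1 (θ : ℝ) : vVec θ 1 = Real.cos θ := rfl

lemma inner_uVec (x : EuclideanSpace ℝ (Fin 2)) (θ : ℝ) :
    ⟪x, uVec θ⟫ = x 0 * Real.cos θ + x 1 * Real.sin θ := by
  simp [PiLp.inner_apply, Fin.sum_univ_two, uVec_apply0, uVec_apply1]
  ring

lemma inner_vVec (x : EuclideanSpace ℝ (Fin 2)) (θ : ℝ) :
    ⟪x, vVec θ⟫ = -(x 0 * Real.sin θ) + x 1 * Real.cos θ := by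
  simp [PiLp.inner_apply, Fin.sum_univ_two, vVec_apply0, vVec_apply1]
  ring

/-- the rotation sending x to (⟪x,uθ⟫, ⟪x,vθ⟫) -/
noncomputable def rotE (θ : ℝ) : EuclideanSpace ℝ (Fin 2) ≃ₗᵢ[ℝ] EuclideanSpace ℝ (Fin 2) :=
  LinearEquiv.isometryOfInner
  { toFun := fun x => (WithLp.equiv 2 (Fin 2 → ℝ)).symm ![⟪x, uVec θ⟫, ⟪x, vVec θ⟫]
    invFun := fun y => y 0 • uVec θ + y 1 • vVec θ
    map_add' := by
      intro x y
      ext i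
      fin_cases i <;>
        simp [inner_add_left, WithLp.equiv_symm_apply, PiLp.toLp_apply]
    map_smul' := by
      intro c x
      ext i
      fin_cases i <;>
        simp [inner_smul_left, WithLp.equiv_symm_apply, PiLp.toLp_apply]
    left_inv := by
      intro x
      ext i
      have h := Real.sin_sq_add_cos_sq θ
      fin_cases i
      · simp [WithLp.equiv_symm_apply, PiLp.toLp_apply, inner_uVec, inner_vVec,
          uVec_apply0, uVec_apply1, vVec_apply0, vVec_apply1, PiLp.add_apply, PiLp.smul_apply,
          smul_eq_mul]
        linear_combination x 0 * Real.sin_sq_add_cos_sq θ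
      · simp [WithLp.equiv_symm_apply, PiLp.toLp_apply, inner_uVec, inner_vVec,
          uVec_apply0, uVec_apply1, vVec_apply0, vVec_apply1, PiLp.add_apply, PiLp.smul_apply,
          smul_eq_mul]
        linear_combination x 1 * Real.sin_sq_add_cos_sq θ
    right_inv := by
      intro y
      ext i
      fin_cases i
      · simp [WithLp.equiv_symm_apply, PiLp.toLp_apply, inner_uVec, inner_vVec,
          uVec_apply0, uVec_apply1, vVec_apply0, vVec_apply1, PiLp.add_apply, PiLp.smul_apply,
          smul_eq_mul]
        linear_combination y 0 * Real.sin_sq_add_cos_sq θ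
      · simp [WithLp.equiv_symm_apply, PiLp.toLp_apply, inner_uVec, inner_vVec,
          uVec_apply0, uVec_apply1, vVec_apply0, vVec_apply1, PiLp.add_apply, PiLp.smul_apply,
          smul_eq_mul]
        linear_combination y 1 * Real.sin_sq_add_cos_sq θ }
  (by
    intro x y
    simp only [LinearEquiv.coe_mk]
    simp [PiLp.inner_apply, Fin.sum_univ_two, WithLp.equiv_symm_apply, PiLp.toLp_apply, inner_uVec, inner_vVec,
      uVec_apply0, uVec_apply1, vVec_apply0, vVec_apply1]
    linear_combination (x 0 * y 0 + x 1 * y 1) * Real.sin_sq_add_cos_sq θ)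

lemma rotE_apply0 (θ : ℝ) (x : EuclideanSpace ℝ (Fin 2)) : rotE θ x 0 = ⟪x, uVec θ⟫ := rfl
lemma rotE_apply1 (θ : ℝ) (x : EuclideanSpace ℝ (Fin 2)) : rotE θ x 1 = ⟪x, vVec θ⟫ := rfl

noncomputable def e2equiv : EuclideanSpace ℝ (Fin 2) ≃ᵐ ℝ × ℝ :=
  (MeasurableEquiv.toLp 2 (Fin 2 → ℝ)).symm.trans (MeasurableEquiv.finTwoArrow)

lemma e2equiv_mp : MeasurePreserving e2equiv volume volume :=
  (volume_preserving_finTwoArrow ℝ).comp (EuclideanSpace.volume_preserving_symm_measurableEquiv_toLp (Fin 2))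

lemma e2equiv_apply (x : EuclideanSpace ℝ (Fin 2)) : e2equiv x = (x 0, x 1) := rfl

lemma prod_integrable {η : ℝ → ℝ} (hi : Integrable η volume) :
    Integrable (fun y : EuclideanSpace ℝ (Fin 2) => η (y 0) * η (y 1)) volume := by
  have h : Integrable (fun p : ℝ × ℝ => η p.1 * η p.2) volume := by
    rw [MeasureTheory.Measure.volume_eq_prod]
    exact hi.mul_prod hi
  exact (e2equiv_mp.integrable_comp_emb e2equiv.measurableEmbedding).2 h

lemma inner_e2 (x y : EuclideanSpace ℝ (Fin 2)) : ⟪x, y⟫ = x 0 * y 0 + x 1 * y 1 := by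
  simp [PiLp.inner_apply, Fin.sum_univ_two]
  ring

lemma prod_fourier (η : ℝ → ℂ) (y : EuclideanSpace ℝ (Fin 2)) :
    𝓕 (fun x : EuclideanSpace ℝ (Fin 2) => η (x 0) * η (x 1)) y =
      𝓕 η (y 0) * 𝓕 η (y 1) := by
  rw [Real.fourier_eq]
  have key : ∀ x : EuclideanSpace ℝ (Fin 2),
      (𝐞 (-⟪x, y⟫) : Circle) • (η (x 0) * η (x 1)) =
        (fun p : ℝ × ℝ => ((𝐞 (-(p.1 * y 0)) : Circle) • η p.1) *
          ((𝐞 (-(p.2 * y 1)) : Circle) • η p.2)) (e2equiv x) := by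
    intro x
    rw [e2equiv_apply]
    simp only [inner_e2, neg_add, AddChar.map_add_eq_mul, Circle.smul_def, Circle.coe_mul, smul_eq_mul]
    ring
  calc ∫ v : EuclideanSpace ℝ (Fin 2), (𝐞 (-⟪v, y⟫) : Circle) • (η (v 0) * η (v 1))
      = ∫ p : ℝ × ℝ, ((𝐞 (-(p.1 * y 0)) : Circle) • η p.1) *
          ((𝐞 (-(p.2 * y 1)) : Circle) • η p.2) := by
        rw [← e2equiv_mp.integral_comp e2equiv.measurableEmbedding]
        exact integral_congr_ae (Filter.Eventually.of_forall key)
    _ = 𝓕 η (y 0) * 𝓕 η (y 1) := by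
        rw [MeasureTheory.Measure.volume_eq_prod, Real.fourier_real_eq,
          Real.fourier_real_eq]
        exact MeasureTheory.integral_prod_mul (L := ℂ)
          (fun a : ℝ => (𝐞 (-(a * y 0)) : Circle) • η a)
          (fun b : ℝ => (𝐞 (-(b * y 1)) : Circle) • η b)

lemma measurable_coord (i : Fin 2) : Measurable (fun y : EuclideanSpace ℝ (Fin 2) => y i) :=
  (measurable_pi_apply i).comp (MeasurableEquiv.toLp 2 (Fin 2 → ℝ)).symm.measurable

lemma coord_null0 {N : Set ℝ} (hN : MeasurableSet N) (h0 : volume N = 0) :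
    volume {y : EuclideanSpace ℝ (Fin 2) | y 0 ∈ N} = 0 := by
  have : {y : EuclideanSpace ℝ (Fin 2) | y 0 ∈ N} = e2equiv ⁻¹' (N ×ˢ Set.univ) := by
      ext y; simp [e2equiv]
  rw [this, e2equiv_mp.measure_preimage (hN.prod MeasurableSet.univ).nullMeasurableSet,
    MeasureTheory.Measure.volume_eq_prod, Measure.prod_prod, h0, zero_mul]

lemma coord_null1 {N : Set ℝ} (hN : MeasurableSet N) (h0 : volume N = 0) :
    volume {y : EuclideanSpace ℝ (Fin 2) | y 1 ∈ N} = 0 := by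
  have : {y : EuclideanSpace ℝ (Fin 2) | y 1 ∈ N} = e2equiv ⁻¹' (Set.univ ×ˢ N) := by
      ext y; simp [e2equiv]
  rw [this, e2equiv_mp.measure_preimage (MeasurableSet.univ.prod hN).nullMeasurableSet,
    MeasureTheory.Measure.volume_eq_prod, Measure.prod_prod, h0, mul_zero]

lemma inner_u_null (θ : ℝ) {N : Set ℝ} (hN : MeasurableSet N) (h0 : volume N = 0) :
    volume {x : EuclideanSpace ℝ (Fin 2) | ⟪x, uVec θ⟫ ∈ N} = 0 := by
  have he : {x : EuclideanSpace ℝ (Fin 2) | ⟪x, uVec θ⟫ ∈ N} =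
      (rotE θ) ⁻¹' {y : EuclideanSpace ℝ (Fin 2) | y 0 ∈ N} := rfl
  rw [he]
  exact ((rotE θ).measurePreserving.measure_preimage
    (((measurable_coord 0) hN).nullMeasurableSet)).trans (coord_null0 hN h0)

lemma inner_v_null (θ : ℝ) {N : Set ℝ} (hN : MeasurableSet N) (h0 : volume N = 0) :
    volume {x : EuclideanSpace ℝ (Fin 2) | ⟪x, vVec θ⟫ ∈ N} = 0 := by
  have he : {x : EuclideanSpace ℝ (Fin 2) | ⟪x, vVec θ⟫ ∈ N} =
      (rotE θ) ⁻¹' {y : EuclideanSpace ℝ (Fin 2) | y 1 ∈ N} := rfl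
  rw [he]
  exact ((rotE θ).measurePreserving.measure_preimage
    (((measurable_coord 1) hN).nullMeasurableSet)).trans (coord_null1 hN h0)

noncomputable abbrev angMeasure : Measure ℝ := volume.restrict (Set.Ioc 0 (2 * π))

instance : IsFiniteMeasure angMeasure :=
  ⟨by rw [Measure.restrict_apply_univ]; exact measure_Ioc_lt_top⟩

lemma measurable_inner_u : Measurable (fun p : EuclideanSpace ℝ (Fin 2) × ℝ => ⟪p.1, uVec p.2⟫) := by
  simp only [inner_uVec]
  exact (((measurable_coord 0).comp measurable_fst).mul (Real.measurable_cos.comp measurable_snd)).add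
    (((measurable_coord 1).comp measurable_fst).mul (Real.measurable_sin.comp measurable_snd))

lemma measurable_inner_v : Measurable (fun p : EuclideanSpace ℝ (Fin 2) × ℝ => ⟪p.1, vVec p.2⟫) := by
  simp only [inner_vVec]
  exact (((measurable_coord 0).comp measurable_fst).mul (Real.measurable_sin.comp measurable_snd)).neg.add
    (((measurable_coord 1).comp measurable_fst).mul (Real.measurable_cos.comp measurable_snd))

/-- a.e. (x, θ), both inner products avoid the null set N. -/
lemma ae_ae_notin {N : Set ℝ} (hN : MeasurableSet N) (h0 : volume N = 0) :
    ∀ᵐ x : EuclideanSpace ℝ (Fin 2) ∂volume, ∀ᵐ θ ∂angMeasure,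
      ⟪x, uVec θ⟫ ∉ N ∧ ⟪x, vVec θ⟫ ∉ N := by
  set T : Set (ℝ × EuclideanSpace ℝ (Fin 2)) :=
    {q | ⟪q.2, uVec q.1⟫ ∈ N ∨ ⟪q.2, vVec q.1⟫ ∈ N} with hT
  have hTm : MeasurableSet T := by
    apply MeasurableSet.union
    · exact (measurable_inner_u.comp measurable_swap) hN
    · exact (measurable_inner_v.comp measurable_swap) hN
  have hT0 : (angMeasure.prod volume) T = 0 := by
    rw [Measure.measure_prod_null hTm]
    refine Filter.Eventually.of_forall fun θ => ?_
    have : Prod.mk θ ⁻¹' T ⊆ {x : EuclideanSpace ℝ (Fin 2) | ⟪x, uVec θ⟫ ∈ N} ∪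
        {x : EuclideanSpace ℝ (Fin 2) | ⟪x, vVec θ⟫ ∈ N} := fun x hx => hx
    exact measure_mono_null this
      (measure_union_null (inner_u_null θ hN h0) (inner_v_null θ hN h0))
  have hS0 : (volume.prod angMeasure) (Prod.swap ⁻¹' T) = 0 := by
    rw [← Measure.map_apply measurable_swap hTm, Measure.prod_swap]
    exact hT0
  have := (Measure.measure_prod_null (μ := (volume : Measure (EuclideanSpace ℝ (Fin 2))))
    (ν := angMeasure) (hTm.preimage measurable_swap)).mp hS0
  filter_upwards [this] with x hx
  rw [ae_iff]
  refine measure_mono_null (fun θ hθ => ?_) hx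
  simp only [Set.mem_setOf_eq] at hθ ⊢
  show (θ, x) ∈ T
  simp only [hT, Set.mem_setOf_eq]
  tauto

lemma comp_rot_eq (η' : ℝ → ℝ) (θ : ℝ) :
    (fun x : EuclideanSpace ℝ (Fin 2) => η' ⟪x, uVec θ⟫ * η' ⟪x, vVec θ⟫) =
      (fun y : EuclideanSpace ℝ (Fin 2) => η' (y 0) * η' (y 1)) ∘ (rotE θ) := rfl

lemma comp_rot_integrable {η' : ℝ → ℝ} (hi' : Integrable η' volume) (θ : ℝ) :
    Integrable (fun x : EuclideanSpace ℝ (Fin 2) => η' ⟪x, uVec θ⟫ * η' ⟪x, vVec θ⟫) volume := by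
  rw [comp_rot_eq]
  exact ((rotE θ).measurePreserving.integrable_comp_emb
    (rotE θ).toHomeomorph.measurableEmbedding).2 (prod_integrable hi')

lemma prodIntegrand_measurable {η' : ℝ → ℝ} (hm : Measurable η') :
    Measurable (fun p : EuclideanSpace ℝ (Fin 2) × ℝ =>
      η' ⟪p.1, uVec p.2⟫ * η' ⟪p.1, vVec p.2⟫) :=
  (hm.comp measurable_inner_u).mul (hm.comp measurable_inner_v)

lemma prodIntegrand_integrable {η' : ℝ → ℝ} (hm : Measurable η') (hi' : Integrable η' volume) :
    Integrable (fun p : EuclideanSpace ℝ (Fin 2) × ℝ =>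
      η' ⟪p.1, uVec p.2⟫ * η' ⟪p.1, vVec p.2⟫) (volume.prod angMeasure) := by
  rw [integrable_prod_iff' (prodIntegrand_measurable hm).aestronglyMeasurable]
  constructor
  · exact Filter.Eventually.of_forall fun θ => comp_rot_integrable hi' θ
  · have hcst : (fun θ : ℝ => ∫ x : EuclideanSpace ℝ (Fin 2),
        ‖η' ⟪x, uVec θ⟫ * η' ⟪x, vVec θ⟫‖) =
        fun _ : ℝ => ∫ y : EuclideanSpace ℝ (Fin 2), ‖η' (y 0) * η' (y 1)‖ := by
      funext θ
      exact (rotE θ).measurePreserving.integral_comp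
        (rotE θ).toHomeomorph.measurableEmbedding
        (fun y : EuclideanSpace ℝ (Fin 2) => ‖η' (y 0) * η' (y 1)‖)
    rw [hcst]
    exact integrable_const _

lemma rad_eq (η' : ℝ → ℝ) (x : EuclideanSpace ℝ (Fin 2)) :
    radialization η' x = (1 / (2 * π)) * ∫ θ, η' ⟪x, uVec θ⟫ * η' ⟪x, vVec θ⟫ ∂angMeasure := by
  rw [radialization, intervalIntegral.integral_of_le (by positivity : (0:ℝ) ≤ 2 * π)]

lemma rad_integrable {η' : ℝ → ℝ} (hm : Measurable η') (hi' : Integrable η' volume) :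
    Integrable (radialization η') volume := by
  have h1 : Integrable (fun x : EuclideanSpace ℝ (Fin 2) =>
      ∫ θ, η' ⟪x, uVec θ⟫ * η' ⟪x, vVec θ⟫ ∂angMeasure) volume :=
    (prodIntegrand_integrable hm hi').integral_prod_left
  have : radialization η' = fun x => (1 / (2 * π)) *
      ∫ θ, η' ⟪x, uVec θ⟫ * η' ⟪x, vVec θ⟫ ∂angMeasure := funext (rad_eq η')
  rw [this]
  exact h1.const_mul _

lemma rad_congr {η η' : ℝ → ℝ} (h : η =ᵐ[volume] η') :
    radialization η =ᵐ[volume] radialization η' := by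
  set N := toMeasurable volume {t | η t ≠ η' t} with hNdef
  have hN : MeasurableSet N := measurableSet_toMeasurable _ _
  have h0 : volume N = 0 := by
    rw [hNdef, measure_toMeasurable]
    exact h
  filter_upwards [ae_ae_notin hN h0] with x hx
  unfold radialization
  congr 1
  apply intervalIntegral.integral_congr_ae
  rw [Set.uIoc_of_le (by positivity : (0:ℝ) ≤ 2 * π)]
  have hx' := (ae_restrict_iff' measurableSet_Ioc).mp hx
  filter_upwards [hx'] with θ hθ hmem
  obtain ⟨h1, h2⟩ := hθ hmem
  have e1 : η ⟪x, uVec θ⟫ = η' ⟪x, uVec θ⟫ := by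
    by_contra hne; exact h1 (subset_toMeasurable _ _ hne)
  have e2 : η ⟪x, vVec θ⟫ = η' ⟪x, vVec θ⟫ := by
    by_contra hne; exact h2 (subset_toMeasurable _ _ hne)
  rw [e1, e2]

lemma fourier_const_mul (c : ℂ) (g : EuclideanSpace ℝ (Fin 2) → ℂ) (w : EuclideanSpace ℝ (Fin 2)) :
    𝓕 (fun x => c * g x) w = c * 𝓕 g w := by
  simp_rw [Real.fourier_eq, Circle.smul_def, smul_eq_mul, mul_left_comm]
  exact integral_const_mul c _

lemma measurable_char (ω : EuclideanSpace ℝ (Fin 2)) :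
    Measurable (fun p : EuclideanSpace ℝ (Fin 2) × ℝ => ((𝐞 (-⟪p.1, ω⟫) : Circle) : ℂ)) := by
  have h1 : Measurable (fun p : EuclideanSpace ℝ (Fin 2) × ℝ => -⟪p.1, ω⟫) := by
    simp only [inner_e2]
    exact ((((measurable_coord 0).comp measurable_fst).mul measurable_const).add
      (((measurable_coord 1).comp measurable_fst).mul measurable_const)).neg
  have h2 : Continuous (fun r : ℝ => ((𝐞 r : Circle) : ℂ)) :=
    continuous_induced_dom.comp Real.continuous_fourierChar
  exact h2.measurable.comp h1

lemma fourier_rad {η' : ℝ → ℝ} (hm : Measurable η') (hi' : Integrable η' volume)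
    (ω : EuclideanSpace ℝ (Fin 2)) :
    𝓕 (fun x : EuclideanSpace ℝ (Fin 2) => (radialization η' x : ℂ)) ω =
      (1 / (2 * π) : ℂ) * ∫ θ in (0:ℝ)..(2 * π),
        𝓕 (fun t : ℝ => (η' t : ℂ)) ⟪ω, uVec θ⟫ * 𝓕 (fun t : ℝ => (η' t : ℂ)) ⟪ω, vVec θ⟫ := by
  have step0 : (fun x : EuclideanSpace ℝ (Fin 2) => (radialization η' x : ℂ)) =
      fun x => (1 / (2 * π) : ℂ) *
        ∫ θ, ((η' ⟪x, uVec θ⟫ * η' ⟪x, vVec θ⟫ : ℝ) : ℂ) ∂angMeasure := by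
    funext x
    rw [rad_eq, Complex.ofReal_mul]
    congr 1
    · push_cast; ring
    · exact (integral_ofReal (𝕜 := ℂ)
        (f := fun θ => η' ⟪x, uVec θ⟫ * η' ⟪x, vVec θ⟫) (μ := angMeasure)).symm
  rw [step0, fourier_const_mul]
  congr 1
  -- the uncurried integrand is integrable
  have hInt : Integrable (fun p : EuclideanSpace ℝ (Fin 2) × ℝ =>
      ((𝐞 (-⟪p.1, ω⟫) : Circle) : ℂ) * ((η' ⟪p.1, uVec p.2⟫ * η' ⟪p.1, vVec p.2⟫ : ℝ) : ℂ))
      (volume.prod angMeasure) := by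
    refine Integrable.bdd_mul ?_ (measurable_char ω).aestronglyMeasurable (c := 1) (Filter.Eventually.of_forall fun p => ?_)
    · exact (prodIntegrand_integrable hm hi').ofReal
    · rw [Circle.norm_coe]
  calc 𝓕 (fun x : EuclideanSpace ℝ (Fin 2) =>
        ∫ θ, ((η' ⟪x, uVec θ⟫ * η' ⟪x, vVec θ⟫ : ℝ) : ℂ) ∂angMeasure) ω
      = ∫ x : EuclideanSpace ℝ (Fin 2), ∫ θ, ((𝐞 (-⟪x, ω⟫) : Circle) : ℂ) *
          ((η' ⟪x, uVec θ⟫ * η' ⟪x, vVec θ⟫ : ℝ) : ℂ) ∂angMeasure := by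
        rw [Real.fourier_eq]
        refine integral_congr_ae (Filter.Eventually.of_forall fun x => ?_)
        beta_reduce
        rw [Circle.smul_def, smul_eq_mul, ← integral_const_mul]
    _ = ∫ θ, (∫ x : EuclideanSpace ℝ (Fin 2), ((𝐞 (-⟪x, ω⟫) : Circle) : ℂ) *
          ((η' ⟪x, uVec θ⟫ * η' ⟪x, vVec θ⟫ : ℝ) : ℂ)) ∂angMeasure :=
        integral_integral_swap hInt
    _ = ∫ θ, 𝓕 (fun t : ℝ => (η' t : ℂ)) ⟪ω, uVec θ⟫ *
          𝓕 (fun t : ℝ => (η' t : ℂ)) ⟪ω, vVec θ⟫ ∂angMeasure := by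
        refine integral_congr_ae (Filter.Eventually.of_forall fun θ => ?_)
        have e1 : (∫ x : EuclideanSpace ℝ (Fin 2), ((𝐞 (-⟪x, ω⟫) : Circle) : ℂ) *
            ((η' ⟪x, uVec θ⟫ * η' ⟪x, vVec θ⟫ : ℝ) : ℂ)) =
            𝓕 ((fun y : EuclideanSpace ℝ (Fin 2) => ((η' (y 0) : ℂ)) * (η' (y 1) : ℂ)) ∘ rotE θ) ω := by
          rw [Real.fourier_eq]
          refine integral_congr_ae (Filter.Eventually.of_forall fun x => ?_)
          beta_reduce
          rw [Circle.smul_def, smul_eq_mul]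
          push_cast
          rfl
        beta_reduce
        rw [e1, Real.fourier_comp_linearIsometry,
          prod_fourier (fun t : ℝ => (η' t : ℂ)) (rotE θ ω)]
        rfl
    _ = ∫ θ in (0:ℝ)..(2 * π), 𝓕 (fun t : ℝ => (η' t : ℂ)) ⟪ω, uVec θ⟫ *
          𝓕 (fun t : ℝ => (η' t : ℂ)) ⟪ω, vVec θ⟫ := by
        rw [intervalIntegral.integral_of_le (by positivity : (0:ℝ) ≤ 2 * π)]

theorem fourier_radialization (η : ℝ → ℝ)
    (hc : HasCompactSupport η) (hi : Integrable η volume) :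
    Integrable (radialization η) (volume : Measure (EuclideanSpace ℝ (Fin 2))) ∧
      ∀ ω : EuclideanSpace ℝ (Fin 2),
        𝓕 (fun x : EuclideanSpace ℝ (Fin 2) => (radialization η x : ℂ)) ω =
          (1 / (2 * π) : ℂ) * ∫ θ in (0:ℝ)..(2 * π),
            𝓕 (fun t : ℝ => (η t : ℂ)) ⟪ω, uVec θ⟫ * 𝓕 (fun t : ℝ => (η t : ℂ)) ⟪ω, vVec θ⟫ := by
  obtain ⟨hmeas, hint, hradeq⟩ :
      ∃ _ : Measurable (hi.1.mk η), Integrable (hi.1.mk η) volume ∧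
        radialization η =ᵐ[volume] radialization (hi.1.mk η) :=
    ⟨hi.1.stronglyMeasurable_mk.measurable, hi.congr hi.1.ae_eq_mk, rad_congr hi.1.ae_eq_mk⟩
  set η₀ := hi.1.mk η with hη₀
  obtain ⟨hint, hradeq⟩ := And.intro hint hradeq
  have hη₀e : η =ᵐ[volume] η₀ := hi.1.ae_eq_mk
  constructor
  · exact (rad_integrable hmeas hint).congr hradeq.symm
  · intro ω
    have hF1 : 𝓕 (fun x : EuclideanSpace ℝ (Fin 2) => (radialization η x : ℂ)) ω =
        𝓕 (fun x : EuclideanSpace ℝ (Fin 2) => (radialization η₀ x : ℂ)) ω := by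
      rw [Real.fourier_eq, Real.fourier_eq]
      refine integral_congr_ae ?_
      filter_upwards [hradeq] with x hx
      simp [hx]
    have hFη : ∀ s : ℝ, 𝓕 (fun t : ℝ => (η t : ℂ)) s = 𝓕 (fun t : ℝ => (η₀ t : ℂ)) s := by
      intro s
      rw [Real.fourier_eq, Real.fourier_eq]
      refine integral_congr_ae ?_
      filter_upwards [hη₀e] with t ht
      simp [ht]
    rw [hF1, fourier_rad hmeas hint ω]
    simp only [hFη]
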